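/- Let p ∈ (0,1), q := 1 − p, let E be a finite set and let (Y_e)_{e∈E} be i.i.d. random variables with ℙ(Y_e = √(q/p)) = p and ℙ(Y_e = −√(p/q)) = q (so 𝔼Y_e = 0 and 𝔼Y_e² = 1). For a finite set A ⊆ E write Y_A := Π_{a∈A} Y_a. Let Ã₁, Ã₂, Ã₃, Ã₄ ⊆ E and, for k = 1,2,3,4, let B_k := { e ∈ E : e belongs to exactly k of the sets Ã₁, Ã₂, Ã₃, Ã₄ }. Then |𝔼[Y_{Ã₁} Y_{Ã₂} Y_{Ã₃} Y_{Ã₄}]| ≤ 1_{{B₁ = ∅}} · (pq)^{−(|B₃| + 2|B₄|)/2}. -/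

import Mathlib

open MeasureTheory ProbabilityTheory

private lemma two_valued_ae' {Ω : Type*} [MeasurableSpace Ω] {μ : Measure Ω}
    [IsProbabilityMeasure μ]
    {f : Ω → ℝ} (hf : Measurable f) {a b : ℝ} {P Q : ℝ} (hP : 0 ≤ P) (hQ : 0 ≤ Q)
    (hμa : μ {ω | f ω = a} = ENNReal.ofReal P)
    (hμb : μ {ω | f ω = b} = ENNReal.ofReal Q)
    (hPQ : P + Q = 1) (hab : a ≠ b) :
    ∀ᵐ ω ∂μ, f ω = a ∨ f ω = b := by
  have hd : Disjoint {ω | f ω = a} {ω | f ω = b} := by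
    rw [Set.disjoint_left]
    rintro ω (h1 : f ω = a) (h2 : f ω = b)
    exact hab (h1 ▸ h2)
  have hma : MeasurableSet {ω | f ω = a} := hf (measurableSet_singleton a)
  have hmb : MeasurableSet {ω | f ω = b} := hf (measurableSet_singleton b)
  have hu : μ ({ω | f ω = a} ∪ {ω | f ω = b}) = 1 := by
    rw [measure_union hd hmb, hμa, hμb, ← ENNReal.ofReal_add hP hQ, hPQ, ENNReal.ofReal_one]
  have h2 : ∀ᵐ ω ∂μ, ω ∈ {ω | f ω = a} ∪ {ω | f ω = b} :=
    (ae_iff_measure_eq (hma.union hmb).nullMeasurableSet).mpr (by rw [measure_univ]; exact hu)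
  filter_upwards [h2] with ω hω using hω

private lemma integral_comp_two_valued' {Ω : Type*} [MeasurableSpace Ω] {μ : Measure Ω}
    [IsProbabilityMeasure μ]
    {f : Ω → ℝ} (hf : Measurable f) {a b : ℝ} {P Q : ℝ} (hP : 0 ≤ P) (hQ : 0 ≤ Q)
    (hμa : μ {ω | f ω = a} = ENNReal.ofReal P)
    (hμb : μ {ω | f ω = b} = ENNReal.ofReal Q)
    (hPQ : P + Q = 1) (hab : a ≠ b) (g : ℝ → ℝ) :
    ∫ ω, g (f ω) ∂μ = g a * P + g b * Q := by
  have hma : MeasurableSet {ω | f ω = a} := hf (measurableSet_singleton a)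
  have hmb : MeasurableSet {ω | f ω = b} := hf (measurableSet_singleton b)
  have hae : (fun ω => g (f ω)) =ᵐ[μ]
      fun ω => Set.indicator {ω | f ω = a} (fun _ => g a) ω
        + Set.indicator {ω | f ω = b} (fun _ => g b) ω := by
    filter_upwards [two_valued_ae' hf hP hQ hμa hμb hPQ hab] with ω hω
    rcases hω with h1 | h1
    · have h2 : f ω ≠ b := by rw [h1]; exact hab
      simp [Set.indicator_apply, h1, h2, hab]
    · have h2 : f ω ≠ a := by rw [h1]; exact fun hc => hab hc.symm
      simp [Set.indicator_apply, h1, h2, Ne.symm hab]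
  rw [integral_congr_ae hae, integral_add (((integrable_const (g a)).indicator hma))
    (((integrable_const (g b)).indicator hmb)), integral_indicator_const _ hma,
    integral_indicator_const _ hmb, measureReal_def, measureReal_def, hμa, hμb, ENNReal.toReal_ofReal hP,
    ENNReal.toReal_ofReal hQ]
  simp [mul_comm]

private lemma indep_integral_prod' {ι : Type*} {Ω : Type*} [MeasurableSpace Ω]
    {μ : Measure Ω} [IsProbabilityMeasure μ] (Z : ι → Ω → ℝ)
    (hmeas : ∀ i, Measurable (Z i)) (hindep : iIndepFun Z μ)
    (s : Finset ι) :
    ∫ ω, ∏ i ∈ s, Z i ω ∂μ = ∏ i ∈ s, ∫ ω, Z i ω ∂μ := by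
  classical
  induction s using Finset.induction_on with
  | empty => simp
  | insert i s hi ih =>
    have hIndep : IndepFun (∏ j ∈ s, Z j) (Z i) μ :=
      hindep.indepFun_finsetProd_of_notMem hmeas hi
    have hXm : AEStronglyMeasurable (∏ j ∈ s, Z j) μ := by
      rw [Finset.prod_fn]
      exact (s.measurable_prod (fun j _ => hmeas j)).aestronglyMeasurable
    calc ∫ ω, ∏ j ∈ insert i s, Z j ω ∂μ
        = ∫ ω, (∏ j ∈ s, Z j) ω * Z i ω ∂μ := by
          apply integral_congr_ae
          filter_upwards with ω
          rw [Finset.prod_insert hi, Finset.prod_apply, mul_comm]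
      _ = (∫ ω, (∏ j ∈ s, Z j) ω ∂μ) * ∫ ω, Z i ω ∂μ :=
          hIndep.integral_fun_mul_eq_mul_integral hXm (hmeas i).aestronglyMeasurable
      _ = (∏ j ∈ s, ∫ ω, Z j ω ∂μ) * ∫ ω, Z i ω ∂μ := by
          congr 1
          rw [← ih]
          apply integral_congr_ae
          filter_upwards with ω
          rw [Finset.prod_apply]
      _ = ∏ j ∈ insert i s, ∫ ω, Z j ω ∂μ := by
          rw [Finset.prod_insert hi, mul_comm]

private theorem rademacher_aux {ι : Type*} [Fintype ι] [DecidableEq ι]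
    {Ω : Type*} [MeasurableSpace Ω] (μ : Measure Ω) [IsProbabilityMeasure μ]
    (p : ℝ) (hp0 : 0 < p) (hp1 : p < 1)
    (Y : ι → Ω → ℝ) (hmeas : ∀ e, Measurable (Y e))
    (hindep : iIndepFun Y μ)
    (hdist : ∀ e, μ {ω | Y e ω = Real.sqrt ((1 - p) / p)} = ENNReal.ofReal p ∧
      μ {ω | Y e ω = -Real.sqrt (p / (1 - p))} = ENNReal.ofReal (1 - p))
    (m : ι → ℕ) (hm4 : ∀ e, m e ≤ 4) :
    |∫ ω, ∏ e, Y e ω ^ m e ∂μ|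
      ≤ (if ∀ e : ι, ¬ (m e = 1)
          then (p * (1 - p)) ^
            (-((Nat.card {e : ι // m e = 3} + 2 * Nat.card {e : ι // m e = 4} : ℕ) : ℝ) / 2)
          else 0) := by
  classical
  have hq0 : (0:ℝ) < 1 - p := by linarith
  set s := Real.sqrt p with hsdef
  set t := Real.sqrt (1 - p) with htdef
  have hs : 0 < s := Real.sqrt_pos.mpr hp0
  have ht : 0 < t := Real.sqrt_pos.mpr hq0
  have hs2 : s ^ 2 = p := Real.sq_sqrt hp0.le
  have ht2 : t ^ 2 = 1 - p := Real.sq_sqrt hq0.le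
  have ha : Real.sqrt ((1 - p) / p) = t / s := by
    rw [Real.sqrt_div hq0.le]
  have hb : -Real.sqrt (p / (1 - p)) = -(s / t) := by
    rw [Real.sqrt_div hp0.le]
  have hab : (t / s) ≠ -(s / t) := by
    have h1 : 0 < t / s := div_pos ht hs
    have h2 : 0 < s / t := div_pos hs ht
    intro h; rw [h] at h1; linarith
  -- moments
  have hIval : ∀ e, ∫ ω, Y e ω ^ m e ∂μ
      = (t/s) ^ m e * p + (-(s/t)) ^ m e * (1 - p) := by
    intro e
    exact integral_comp_two_valued' (hmeas e) hp0.le hq0.le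
      (ha ▸ (hdist e).1) (hb ▸ (hdist e).2) (by ring) hab (fun x => x ^ m e)
  -- independence
  have hZindep : iIndepFun (fun e ω => Y e ω ^ m e) μ :=
    hindep.comp (fun e (x : ℝ) => x ^ m e) (fun e => measurable_id.pow_const _)
  have hint : ∫ ω, ∏ e, Y e ω ^ m e ∂μ = ∏ e, ∫ ω, Y e ω ^ m e ∂μ :=
    indep_integral_prod' (fun e ω => Y e ω ^ m e)
      (fun e => (hmeas e).pow_const _) hZindep _
  by_cases hB : ∀ e : ι, ¬ (m e = 1)
  swap
  · rw [if_neg hB]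
    push_neg at hB
    obtain ⟨e₀, he₀⟩ := hB
    have h0 : ∫ ω, ∏ e, Y e ω ^ m e ∂μ = 0 := by
      rw [hint]
      apply Finset.prod_eq_zero (Finset.mem_univ e₀)
      rw [hIval, he₀]
      rw [← ht2, ← hs2]
      field_simp
      ring
    rw [h0, abs_zero]
  · rw [if_pos hB]
    have hst1 : s ^ 2 + t ^ 2 = 1 := by rw [hs2, ht2]; ring
    set c : ι → ℝ := fun e =>
      if m e = 3 then (s*t)⁻¹ else if m e = 4 then ((s*t)^2)⁻¹ else 1 with hc
    have hbound : ∀ e, |∫ ω, Y e ω ^ m e ∂μ| ≤ c e := by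
      intro e
      rw [hIval]
      have h4 := hm4 e
      have h1 := hB e
      have hme : m e = 0 ∨ m e = 2 ∨ m e = 3 ∨ m e = 4 := by omega
      have hu' : 0 < s * t := mul_pos hs ht
      rcases hme with h | h | h | h
      · have hce : c e = 1 := by simp [hc, h]
        rw [hce, h]
        rw [show (t/s)^0 * p + (-(s/t))^0 * (1-p) = 1 by ring]
        norm_num
      · have hce : c e = 1 := by simp [hc, h]
        rw [hce, h]
        have hval : (t/s)^2 * p + (-(s/t))^2 * (1-p) = 1 := by
          rw [← ht2, ← hs2]; field_simp; linarith [hst1]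
        rw [hval]
        norm_num
      · have hce : c e = (s*t)⁻¹ := by simp [hc, h]
        rw [hce, h]
        have hval : (t/s)^3 * p + (-(s/t))^3 * (1-p) = (t^4 - s^4)/(s*t) := by
          rw [← ht2, ← hs2]; field_simp; ring
        rw [hval, abs_div, abs_of_pos hu', inv_eq_one_div]
        gcongr
        rw [abs_le]
        constructor
        · nlinarith [sq_nonneg (s*t), sq_nonneg (t^2)]
        · nlinarith [sq_nonneg (s*t), sq_nonneg (s^2)]
      · have hce : c e = ((s*t)^2)⁻¹ := by simp [hc, h]
        rw [hce, h]
        have hval : (t/s)^4 * p + (-(s/t))^4 * (1-p) = (t^6 + s^6)/((s*t)^2) := by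
          rw [← ht2, ← hs2]; field_simp
        rw [hval, abs_of_nonneg (by positivity), inv_eq_one_div]
        gcongr
        nlinarith [mul_nonneg (mul_nonneg (sq_nonneg s) (sq_nonneg s)) (sq_nonneg t),
            mul_nonneg (mul_nonneg (sq_nonneg t) (sq_nonneg t)) (sq_nonneg s)]
    set n₃ := (Finset.univ.filter (fun e => m e = 3)).card with hn3
    set n₄ := (Finset.univ.filter (fun e => m e = 4)).card with hn4
    have hcprod : ∏ e, c e = ((s*t)⁻¹) ^ n₃ * (((s*t)^2)⁻¹) ^ n₄ := by
      rw [hc]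
      rw [Finset.prod_ite]
      rw [Finset.prod_const]
      congr 1
      rw [Finset.prod_ite, Finset.prod_const, Finset.prod_const_one, mul_one,
        Finset.filter_filter]
      congr 2
      ext e
      simp only [Finset.mem_filter, Finset.mem_univ, true_and]
      omega
    have hN3 : Nat.card {e : ι // m e = 3} = n₃ := by
      rw [Nat.card_eq_fintype_card, Fintype.card_subtype]
    have hN4 : Nat.card {e : ι // m e = 4} = n₄ := by
      rw [Nat.card_eq_fintype_card, Fintype.card_subtype]
    rw [hN3, hN4]
    have hu : 0 < s * t := mul_pos hs ht
    have hpq : p * (1 - p) = (s*t) ^ 2 := by rw [← ht2, ← hs2]; ring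
    have key : (p * (1-p)) ^ (-(((n₃ + 2*n₄ : ℕ)):ℝ)/2)
        = ((s*t)⁻¹) ^ n₃ * (((s*t)^2)⁻¹) ^ n₄ := by
      rw [hpq]
      rw [show (((s*t):ℝ)^2) = (s*t) ^ ((2:ℕ):ℝ) from (Real.rpow_natCast (s*t) 2).symm]
      rw [← Real.rpow_mul hu.le]
      rw [show ((2:ℕ):ℝ) * (-(((n₃ + 2*n₄ : ℕ)):ℝ)/2) = -((n₃ + 2*n₄ : ℕ):ℝ) by push_cast; ring]
      rw [Real.rpow_neg hu.le, Real.rpow_natCast]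
      rw [pow_add, pow_mul, mul_inv, inv_pow, inv_pow]
      norm_num
    rw [key]
    calc |∫ ω, ∏ e, Y e ω ^ m e ∂μ| = ∏ e, |∫ ω, Y e ω ^ m e ∂μ| := by
          rw [hint, Finset.abs_prod]
      _ ≤ ∏ e, c e :=
          Finset.prod_le_prod (fun e _ => abs_nonneg _) (fun e _ => hbound e)
      _ = ((s*t)⁻¹) ^ n₃ * (((s*t)^2)⁻¹) ^ n₄ := hcprod

/-- let `(Y_e)_{e∈E}` be i.i.d. normalized Rademacher variables with parameter
`p` and, for `k = 1,2,3,4`, let `B_k` be the set of indices belonging to exactly `k` of the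
sets `Ã₁, Ã₂, Ã₃, Ã₄`. Then
`|𝔼[Y_{Ã₁} Y_{Ã₂} Y_{Ã₃} Y_{Ã₄}]| ≤ 1_{B₁ = ∅} · (pq)^{-(|B₃| + 2|B₄|)/2}`. -/
theorem abs_integral_prod_rademacher_le
    {ι : Type*} [Fintype ι] [DecidableEq ι]
    {Ω : Type*} [MeasurableSpace Ω] (μ : Measure Ω) [IsProbabilityMeasure μ]
    (p : ℝ) (hp : p ∈ Set.Ioo (0 : ℝ) 1)
    (Y : ι → Ω → ℝ) (hmeas : ∀ e, Measurable (Y e))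
    (hindep : iIndepFun Y μ)
    (hdist : ∀ e, μ {ω | Y e ω = Real.sqrt ((1 - p) / p)} = ENNReal.ofReal p ∧
      μ {ω | Y e ω = -Real.sqrt (p / (1 - p))} = ENNReal.ofReal (1 - p))
    (A₁ A₂ A₃ A₄ : Finset ι) :
    |∫ ω, (∏ a ∈ A₁, Y a ω) * (∏ a ∈ A₂, Y a ω) * (∏ a ∈ A₃, Y a ω) * (∏ a ∈ A₄, Y a ω) ∂μ|
      ≤ (if ∀ e : ι,
            ¬ ((if e ∈ A₁ then 1 else 0) + (if e ∈ A₂ then 1 else 0)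
              + (if e ∈ A₃ then 1 else 0) + (if e ∈ A₄ then (1 : ℕ) else 0) = 1)
          then (p * (1 - p)) ^
            (-((Nat.card {e : ι // (if e ∈ A₁ then 1 else 0) + (if e ∈ A₂ then 1 else 0)
                  + (if e ∈ A₃ then 1 else 0) + (if e ∈ A₄ then (1 : ℕ) else 0) = 3}
              + 2 * Nat.card {e : ι // (if e ∈ A₁ then 1 else 0) + (if e ∈ A₂ then 1 else 0)
                  + (if e ∈ A₃ then 1 else 0) + (if e ∈ A₄ then (1 : ℕ) else 0) = 4} : ℕ) : ℝ)
              / 2)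
          else 0) := by
  classical
  obtain ⟨hp0, hp1⟩ := hp
  have key := rademacher_aux μ p hp0 hp1 Y hmeas hindep hdist
    (fun e => (if e ∈ A₁ then 1 else 0) + (if e ∈ A₂ then 1 else 0)
      + (if e ∈ A₃ then 1 else 0) + (if e ∈ A₄ then (1 : ℕ) else 0))
    (fun e => by split_ifs <;> norm_num)
  have hprod : ∀ ω : Ω,
      (∏ a ∈ A₁, Y a ω) * (∏ a ∈ A₂, Y a ω) * (∏ a ∈ A₃, Y a ω) * (∏ a ∈ A₄, Y a ω)
      = ∏ e, Y e ω ^ ((if e ∈ A₁ then 1 else 0) + (if e ∈ A₂ then 1 else 0)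
          + (if e ∈ A₃ then 1 else 0) + (if e ∈ A₄ then (1 : ℕ) else 0)) := by
    intro ω
    have h1 : ∀ A : Finset ι, ∏ a ∈ A, Y a ω
        = ∏ e, Y e ω ^ (if e ∈ A then (1:ℕ) else 0) := by
      intro A
      rw [show (∏ e, Y e ω ^ (if e ∈ A then (1:ℕ) else 0))
          = ∏ e, (if e ∈ A then Y e ω else 1) from
        Finset.prod_congr rfl (fun e _ => by split <;> simp)]
      rw [Finset.prod_ite_mem, Finset.univ_inter]
    rw [h1 A₁, h1 A₂, h1 A₃, h1 A₄, ← Finset.prod_mul_distrib, ← Finset.prod_mul_distrib,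
      ← Finset.prod_mul_distrib]
    exact Finset.prod_congr rfl fun e _ => by rw [← pow_add, ← pow_add, ← pow_add]
  have hIeq : (∫ ω, (∏ a ∈ A₁, Y a ω) * (∏ a ∈ A₂, Y a ω) * (∏ a ∈ A₃, Y a ω)
        * (∏ a ∈ A₄, Y a ω) ∂μ)
      = ∫ ω, ∏ e, Y e ω ^ ((if e ∈ A₁ then 1 else 0) + (if e ∈ A₂ then 1 else 0)
          + (if e ∈ A₃ then 1 else 0) + (if e ∈ A₄ then (1 : ℕ) else 0)) ∂μ := by
    apply integral_congr_ae
    filter_upwards with ω using hprod ω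
  rw [hIeq]
  exact key
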